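/- arXiv:2212.06129 — 2 statements merged into one kernel-verified Lean document; each statement's English description precedes it below -/
import Mathlib

section
/- Let X be a real-valued random variable with law μ, let X_1,…,X_N be i.i.d. samples of X, and let M = min(X_1,…,X_N). For any ε ∈ [0,1], the probability (over the N samples) that μ({x : x ≥ M}) ≥ 1 − ε is at least 1 − (1−ε)^N. -/
open MeasureTheory ProbabilityTheory

lemma aux_measurable_inf' {Ω ι : Type*} [MeasurableSpace Ω] (s : Finset ι)
    (hs : s.Nonempty) (f : ι → Ω → ℝ) (hf : ∀ i, Measurable (f i)) :
    Measurable fun ω => s.inf' hs fun i => f i ω := by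
  induction hs using Finset.Nonempty.cons_induction with
  | singleton i =>
      simp only [Finset.inf'_singleton]
      exact hf i
  | cons i t hit ht ih =>
      have heq : ∀ ω, (Finset.cons i t hit).inf' (Finset.cons_nonempty hit) (fun j => f j ω)
          = f i ω ⊓ t.inf' ht (fun j => f j ω) := fun ω => Finset.inf'_cons ht (fun j => f j ω)
      simp only [heq]
      exact (hf i).inf ih

/-- Scenario-verification bound: the minimum of `N` i.i.d. samples underperforms the
`(1-ε)`-quantile with confidence at least `1 - (1-ε)^N`. -/
theorem stmt_0 {Ω : Type*} [MeasurableSpace Ω] (P : Measure Ω) [IsProbabilityMeasure P]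
    (μ : Measure ℝ) [IsProbabilityMeasure μ] (N : ℕ) (hN : 0 < N)
    (X : Fin N → Ω → ℝ) (hmeas : ∀ i, Measurable (X i))
    (hindep : iIndepFun X P)
    (hlaw : ∀ i, Measure.map (X i) P = μ)
    (ε : ℝ) (hε : ε ∈ Set.Icc (0 : ℝ) 1)
    (hne : (Finset.univ : Finset (Fin N)).Nonempty)
    (M : Ω → ℝ) (hM : ∀ ω, M ω = Finset.univ.inf' hne (fun i => X i ω)) :
    1 - (1 - ε) ^ N ≤
      (P {ω | 1 - ε ≤ (μ {x | M ω ≤ x}).toReal}).toReal := by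
  obtain ⟨hε0, hε1⟩ := hε
  rcases eq_or_lt_of_le hε0 with h0 | hεpos
  · rw [← h0]
    simp [ENNReal.toReal_nonneg]
  -- notation
  set g : ℝ → ℝ := fun x => (μ (Set.Iio x)).toReal with hg
  have hgdef : ∀ x, g x = (μ (Set.Iio x)).toReal := fun _ => rfl
  set A : Set ℝ := {x | ε < g x} with hA
  have hgmono : Monotone g := fun x y hxy =>
    ENNReal.toReal_mono (measure_ne_top μ _) (measure_mono (Set.Iio_subset_Iio hxy))
  have hupper : ∀ ⦃x y : ℝ⦄, x ≤ y → x ∈ A → y ∈ A := fun x y hxy hx =>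
    lt_of_lt_of_le hx (hgmono hxy)
  have hAiff : ∀ x, x ∈ A ↔ ENNReal.ofReal ε < μ (Set.Iio x) := by
    intro x
    rw [hA, Set.mem_setOf_eq, hgdef, ENNReal.ofReal_lt_iff_lt_toReal hε0 (measure_ne_top μ _)]
  -- key: A is measurable with μ A ≤ ofReal (1-ε)
  have hkey : MeasurableSet A ∧ μ A ≤ ENNReal.ofReal (1 - ε) := by
    rcases Set.eq_empty_or_nonempty A with hAe | hAne
    · rw [hAe]; simp
    -- Aᶜ nonempty: find x with small measure
    have hx0 : ∃ x : ℝ, x ∉ A := by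
      by_contra h
      push_neg at h
      -- μ (Iio (-n)) tends to 0
      have hanti : Antitone fun n : ℕ => Set.Iio (-(n : ℝ)) := fun m n hmn =>
        Set.Iio_subset_Iio (by exact_mod_cast neg_le_neg (by exact_mod_cast hmn))
      have hInt : (⋂ n : ℕ, Set.Iio (-(n : ℝ))) = ∅ := by
        ext x
        simp only [Set.mem_iInter, Set.mem_Iio, Set.mem_empty_iff_false, iff_false, not_forall,
          not_lt]
        obtain ⟨n, hn⟩ := exists_nat_gt (-x)
        exact ⟨n, by linarith⟩
      have htend := tendsto_measure_iInter_atTop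
        (fun n : ℕ => (measurableSet_Iio).nullMeasurableSet) hanti ⟨0, measure_ne_top μ _⟩
      rw [hInt, measure_empty] at htend
      have := htend.eventually_lt_const (show (0 : ENNReal) < ENNReal.ofReal ε by simpa using hεpos)
      obtain ⟨n, hn⟩ := this.exists
      exact absurd ((hAiff _).1 (h (-(n : ℝ)))) (not_lt.2 hn.le)
    obtain ⟨x0, hx0⟩ := hx0
    have hbdd : BddBelow A := ⟨x0, fun a ha => by
      by_contra h
      exact hx0 (hupper (le_of_not_ge h) ha)⟩
    set c : ℝ := sInf A with hc
    -- everything above c is in A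
    have habove : ∀ x, c < x → x ∈ A := by
      intro x hx
      obtain ⟨a, haA, hax⟩ := (csInf_lt_iff hbdd hAne).1 hx
      exact hupper hax.le haA
    -- μ (Iic c) ≥ ofReal ε
    have hIic : ENNReal.ofReal ε ≤ μ (Set.Iic c) := by
      have hanti : Antitone fun n : ℕ => Set.Iio (c + 1 / ((n : ℝ) + 1)) := by
        intro m n hmn
        apply Set.Iio_subset_Iio
        have : (1 : ℝ) / ((n : ℝ) + 1) ≤ 1 / ((m : ℝ) + 1) := by
          apply one_div_le_one_div_of_le (by positivity)
          exact_mod_cast add_le_add_left (Nat.cast_le.2 hmn) 1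
        linarith
      have hInt : (⋂ n : ℕ, Set.Iio (c + 1 / ((n : ℝ) + 1))) = Set.Iic c := by
        ext x
        simp only [Set.mem_iInter, Set.mem_Iio, Set.mem_Iic]
        constructor
        · intro h
          by_contra hxc
          push_neg at hxc
          obtain ⟨n, hn⟩ := exists_nat_one_div_lt (show (0:ℝ) < x - c by linarith)
          have := h n
          linarith
        · intro h n
          have : (0:ℝ) < 1 / ((n : ℝ) + 1) := by positivity
          linarith
      have htend := tendsto_measure_iInter_atTop
        (fun n : ℕ => (measurableSet_Iio).nullMeasurableSet) hanti ⟨0, measure_ne_top μ _⟩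
      rw [hInt] at htend
      refine ge_of_tendsto' htend fun n => ?_
      have hmem : c + 1 / ((n : ℝ) + 1) ∈ A := habove _ (by
        have : (0:ℝ) < 1 / ((n : ℝ) + 1) := by positivity
        linarith)
      exact ((hAiff _).1 hmem).le
    by_cases hcA : c ∈ A
    · -- A = Ici c
      have hAeq : A = Set.Ici c := by
        ext x
        constructor
        · intro hx; exact csInf_le hbdd hx
        · intro hx; exact hupper hx hcA
      constructor
      · rw [hAeq]; exact measurableSet_Ici
      · rw [hAeq, ← Set.compl_Iio, measure_compl measurableSet_Iio (measure_ne_top μ _),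
          measure_univ]
        have h1 : ENNReal.ofReal ε ≤ μ (Set.Iio c) := ((hAiff _).1 hcA).le
        calc 1 - μ (Set.Iio c) ≤ 1 - ENNReal.ofReal ε := tsub_le_tsub_left h1 1
          _ = ENNReal.ofReal (1 - ε) := by
              rw [ENNReal.ofReal_sub 1 hε0, ENNReal.ofReal_one]
    · -- A = Ioi c
      have hAeq : A = Set.Ioi c := by
        ext x
        constructor
        · intro hx
          rcases lt_or_eq_of_le (csInf_le hbdd hx) with h | h
          · exact h
          · exact absurd (by rwa [← h] at hx) hcA
        · exact fun hx => habove x hx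
      constructor
      · rw [hAeq]; exact measurableSet_Ioi
      · rw [hAeq, ← Set.compl_Iic, measure_compl measurableSet_Iic (measure_ne_top μ _),
          measure_univ]
        calc 1 - μ (Set.Iic c) ≤ 1 - ENNReal.ofReal ε := tsub_le_tsub_left hIic 1
          _ = ENNReal.ofReal (1 - ε) := by
              rw [ENNReal.ofReal_sub 1 hε0, ENNReal.ofReal_one]
  obtain ⟨hAmeas, hAle⟩ := hkey
  -- the event equals (M ⁻¹' A)ᶜ
  have hIciReal : ∀ m : ℝ, (μ {x | m ≤ x}).toReal = 1 - g m := by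
    intro m
    have h1 : {x : ℝ | m ≤ x} = (Set.Iio m)ᶜ := by
      ext x; simp [not_lt]
    rw [h1, measure_compl measurableSet_Iio (measure_ne_top μ _), measure_univ,
      ENNReal.toReal_sub_of_le prob_le_one ENNReal.one_ne_top, ENNReal.toReal_one, hgdef]
  have hevent : {ω | 1 - ε ≤ (μ {x | M ω ≤ x}).toReal} = (M ⁻¹' A)ᶜ := by
    ext ω
    simp only [Set.mem_setOf_eq, Set.mem_compl_iff, Set.mem_preimage, hA, hIciReal, not_lt]
    constructor <;> intro h <;> linarith
  -- M is measurable
  have hMmeas : Measurable M := by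
    have : M = fun ω => Finset.univ.inf' hne fun i => X i ω := funext hM
    rw [this]
    exact aux_measurable_inf' _ hne X hmeas
  -- bad event is contained in the intersection
  have hsub : M ⁻¹' A ⊆ ⋂ i, X i ⁻¹' A := by
    intro ω hω
    simp only [Set.mem_iInter, Set.mem_preimage]
    intro i
    have hle : M ω ≤ X i ω := by
      rw [hM ω]
      exact Finset.inf'_le _ (Finset.mem_univ i)
    exact hupper hle hω
  -- independence: product bound
  have hprod : P (⋂ i, X i ⁻¹' A) = μ A ^ N := by
    have := hindep.measure_inter_preimage_eq_mul Finset.univ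
      (sets := fun _ => A) (fun i _ => hAmeas)
    simp only [Finset.mem_univ, Set.iInter_true] at this
    rw [this]
    have hXA : ∀ i : Fin N, P (X i ⁻¹' A) = μ A := by
      intro i
      rw [← hlaw i, Measure.map_apply (hmeas i) hAmeas]
    rw [Finset.prod_congr rfl fun i _ => hXA i, Finset.prod_const, Finset.card_univ,
      Fintype.card_fin]
  have hbad : P (M ⁻¹' A) ≤ ENNReal.ofReal ((1 - ε) ^ N) := by
    calc P (M ⁻¹' A) ≤ P (⋂ i, X i ⁻¹' A) := measure_mono hsub
      _ = μ A ^ N := hprod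
      _ ≤ ENNReal.ofReal (1 - ε) ^ N := pow_le_pow_left' hAle N
      _ = ENNReal.ofReal ((1 - ε) ^ N) := (ENNReal.ofReal_pow (by linarith) N).symm
  have hbadmeas : MeasurableSet (M ⁻¹' A) := hMmeas hAmeas
  rw [hevent, measure_compl hbadmeas (measure_ne_top P _), measure_univ,
    ENNReal.toReal_sub_of_le prob_le_one ENNReal.one_ne_top, ENNReal.toReal_one]
  have : (P (M ⁻¹' A)).toReal ≤ (1 - ε) ^ N :=
    ENNReal.toReal_le_of_le_ofReal (pow_nonneg (by linarith) N) hbad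
  linarith
end

section
/- Let μ be a probability measure on ℝ with a strictly increasing continuous CDF F. If X_1,…,X_N are i.i.d. with law μ and M = min_i X_i, then ℙ[ μ({x : x ≥ M}) ≥ 1−ε ] = ℙ[ F(M) ≤ ε ] = 1 − (1−ε)^N, i.e., the bound in the scenario-verification theorem is tight for atomless distributions. -/
open MeasureTheory ProbabilityTheory

open Set Filter Topology in
private lemma cdf_aux (μ : Measure ℝ) [IsProbabilityMeasure μ]
    (F : ℝ → ℝ) (hFx : ∀ x, F x = (μ (Set.Iic x)).toReal) (hFcont : Continuous F)
    (m : ℝ) : μ {m} = 0 := by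
  have hFcdf : ⇑(ProbabilityTheory.cdf μ) = F := funext fun x => by
    rw [hFx, ProbabilityTheory.cdf_eq_real, measureReal_def]
  have h1 : μ = (ProbabilityTheory.cdf μ).measure := (ProbabilityTheory.measure_cdf μ).symm
  rw [h1, StieltjesFunction.measure_singleton]
  have hll : Function.leftLim (⇑(ProbabilityTheory.cdf μ)) m = ProbabilityTheory.cdf μ m := by
    apply leftLim_eq_of_tendsto
    rw [hFcdf]
    exact (hFcont.tendsto m).mono_left nhdsWithin_le_nhds
  rw [hll, sub_self, ENNReal.ofReal_zero]

/-- Tightness of the scenario bound for atomless distributions: with a strictly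
increasing continuous CDF `F`, both `ℙ[μ([M,∞)) ≥ 1-ε]` and `ℙ[F(M) ≤ ε]` equal
`1 - (1-ε)^N`. -/
theorem stmt_13 {Ω : Type*} [MeasurableSpace Ω] (P : Measure Ω) [IsProbabilityMeasure P]
    (μ : Measure ℝ) [IsProbabilityMeasure μ] (N : ℕ) (hN : 0 < N)
    (F : ℝ → ℝ) (hF : F = fun x => (μ (Set.Iic x)).toReal)
    (hFmono : StrictMono F) (hFcont : Continuous F)
    (X : Fin N → Ω → ℝ) (hmeas : ∀ i, Measurable (X i))
    (hindep : iIndepFun X P)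
    (hlaw : ∀ i, Measure.map (X i) P = μ)
    (ε : ℝ) (hε : ε ∈ Set.Icc (0 : ℝ) 1)
    (hne : (Finset.univ : Finset (Fin N)).Nonempty)
    (M : Ω → ℝ) (hM : ∀ ω, M ω = Finset.univ.inf' hne (fun i => X i ω)) :
    (P {ω | 1 - ε ≤ (μ (Set.Ici (M ω))).toReal}).toReal = 1 - (1 - ε) ^ N ∧
    (P {ω | F (M ω) ≤ ε}).toReal = 1 - (1 - ε) ^ N := by
  have hFx : ∀ x, F x = (μ (Set.Iic x)).toReal := fun x => by rw [hF]
  have hFcdf : ∀ x, F x = ProbabilityTheory.cdf μ x := fun x => by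
    rw [hFx, ProbabilityTheory.cdf_eq_real, measureReal_def]
  have hatom : ∀ m : ℝ, μ {m} = 0 := cdf_aux μ F hFx hFcont
  have hFpos : ∀ x, 0 < F x := fun x =>
    lt_of_le_of_lt (hFx (x - 1) ▸ ENNReal.toReal_nonneg) (hFmono (sub_one_lt x))
  have hFle1 : ∀ x, F x ≤ 1 := fun x => (hFcdf x) ▸ ProbabilityTheory.cdf_le_one μ x
  have hIio : ∀ m : ℝ, μ (Set.Iio m) = μ (Set.Iic m) := by
    intro m
    refine le_antisymm (measure_mono Set.Iio_subset_Iic_self) ?_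
    calc μ (Set.Iic m) = μ (Set.Iio m ∪ {m}) := by rw [Set.Iio_union_right]
      _ ≤ μ (Set.Iio m) + μ {m} := measure_union_le _ _
      _ = μ (Set.Iio m) := by rw [hatom, add_zero]
  have hIci : ∀ m : ℝ, (μ (Set.Ici m)).toReal = 1 - F m := by
    intro m
    rw [← Set.compl_Iio, measure_compl measurableSet_Iio (measure_ne_top μ _), measure_univ, hIio,
      ENNReal.toReal_sub_of_le prob_le_one ENNReal.one_ne_top, ENNReal.toReal_one, hFx]
  have hsets : {ω | 1 - ε ≤ (μ (Set.Ici (M ω))).toReal} = {ω | F (M ω) ≤ ε} := by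
    ext ω
    simp only [Set.mem_setOf_eq, hIci]
    constructor <;> intro h <;> linarith
  obtain ⟨hε0, hε1⟩ := hε
  suffices key : (P {ω | F (M ω) ≤ ε}).toReal = 1 - (1 - ε) ^ N by
    exact ⟨hsets ▸ key, key⟩
  rcases eq_or_lt_of_le hε0 with h0 | h0
  · have hempty : {ω | F (M ω) ≤ ε} = ∅ := by
      ext ω
      simp only [Set.mem_setOf_eq, Set.mem_empty_iff_false, iff_false, not_le, ← h0]
      exact hFpos _
    rw [hempty, ← h0]
    simp
  rcases eq_or_lt_of_le hε1 with h1 | h1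
  · have huniv : {ω | F (M ω) ≤ ε} = Set.univ := by
      ext ω
      simp only [Set.mem_setOf_eq, Set.mem_univ, iff_true, h1 ▸ hFle1 (M ω)]
    rw [huniv, measure_univ, ENNReal.toReal_one, ← h1]
    simp [zero_pow hN.ne']
  -- main case 0 < ε < 1
  obtain ⟨a, ha⟩ : ∃ a, F a = ε := by
    have hFfun : (fun x => ProbabilityTheory.cdf μ x) = F := funext fun x => (hFcdf x).symm
    have htop : Filter.Tendsto F Filter.atTop (nhds 1) :=
      hFfun ▸ ProbabilityTheory.tendsto_cdf_atTop μ
    have hbot : Filter.Tendsto F Filter.atBot (nhds 0) :=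
      hFfun ▸ ProbabilityTheory.tendsto_cdf_atBot μ
    obtain ⟨x0, hx0⟩ := (hbot.eventually_lt_const h0).exists
    obtain ⟨x1, hx1⟩ := (htop.eventually_const_lt h1).exists
    have hx01 : x0 ≤ x1 := le_of_lt (hFmono.lt_iff_lt.mp (hx0.trans hx1))
    obtain ⟨a, _, ha⟩ := intermediate_value_Icc hx01 hFcont.continuousOn
      ⟨le_of_lt hx0, le_of_lt hx1⟩
    exact ⟨a, ha⟩
  have hEq : {ω | F (M ω) ≤ ε} = ⋃ i, X i ⁻¹' (Set.Iic a) := by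
    ext ω
    simp only [Set.mem_setOf_eq, Set.mem_iUnion, Set.mem_preimage, Set.mem_Iic, hM ω, ← ha,
      hFmono.le_iff_le]
    simp [Finset.inf'_le_iff]
  have hmeasInt : MeasurableSet (⋂ i, X i ⁻¹' (Set.Ioi a)) :=
    MeasurableSet.iInter fun i => (hmeas i) measurableSet_Ioi
  have hcompl : (⋃ i, X i ⁻¹' (Set.Iic a)) = (⋂ i, X i ⁻¹' (Set.Ioi a))ᶜ := by
    simp [Set.compl_iInter, ← Set.preimage_compl, Set.compl_Ioi]
  have hInd : P (⋂ i, X i ⁻¹' (Set.Ioi a)) = ∏ i, P (X i ⁻¹' (Set.Ioi a)) :=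
    hindep.meas_iInter fun i => ⟨Set.Ioi a, measurableSet_Ioi, rfl⟩
  have hXi : ∀ i, P (X i ⁻¹' (Set.Ioi a)) = μ (Set.Ioi a) := fun i => by
    rw [← hlaw i, Measure.map_apply (hmeas i) measurableSet_Ioi]
  have hIoi : (μ (Set.Ioi a)).toReal = 1 - ε := by
    rw [← Set.compl_Iic, measure_compl measurableSet_Iic (measure_ne_top μ _), measure_univ,
      ENNReal.toReal_sub_of_le prob_le_one ENNReal.one_ne_top, ENNReal.toReal_one,
      (hFx a).symm.trans ha]
  rw [hEq, hcompl, prob_compl_eq_one_sub hmeasInt, hInd,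
    ENNReal.toReal_sub_of_le (Finset.prod_le_one (fun i _ => zero_le) (fun i _ => prob_le_one))
      ENNReal.one_ne_top,
    ENNReal.toReal_one, ENNReal.toReal_prod]
  simp [hXi, hIoi]
end
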